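/- arXiv:2106.07017 — 6 statements merged into one kernel-verified Lean document; each statement's English description precedes it below -/
import Mathlib

section
/- If w is a string of length m with smallest period p ≤ m/2, then for any two occurrences of w in a string S starting at positions i < j, either j - i is a multiple of p with j - i ≤ m - p, or j - i > m/2. -/
/-- `w` (a string of length `m`, 0-indexed) occurs in `S` at position `i`. -/
def occursAt {α : Type*} (S w : ℕ → α) (m i : ℕ) : Prop :=
  ∀ t < m, S (i + t) = w t

/-- `p` is a period of the length-`m` string `w`. -/
def hasPeriod {α : Type*} (w : ℕ → α) (m p : ℕ) : Prop :=
  ∀ t, t + p < m → w t = w (t + p)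

lemma fineWilf {α : Type*} : ∀ N p q m (w : ℕ → α), p + q ≤ N → p + q ≤ m →
    hasPeriod w m p → hasPeriod w m q → hasPeriod w m (Nat.gcd p q) := by
  intro N
  induction N with
  | zero =>
    intro p q m w hN hm hp hq
    obtain ⟨rfl, rfl⟩ : p = 0 ∧ q = 0 := by omega
    simpa using hp
  | succ n ih =>
    intro p q m w hN hm hp hq
    rcases Nat.eq_zero_or_pos p with hp0 | hp0
    · subst hp0; simpa using hq
    rcases Nat.eq_zero_or_pos q with hq0 | hq0
    · subst hq0; simpa using hp
    rcases lt_trichotomy p q with hlt | heq | hgt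
    · -- p < q : recurse with (p, q - p) on length m - p
      have hqp : hasPeriod w (m - p) (q - p) := by
        intro t ht
        have htq : t + q < m := by omega
        have h1 : w t = w (t + q) := hq t htq
        have h2 : w (t + (q - p)) = w (t + (q - p) + p) := hp _ (by omega)
        have : t + (q - p) + p = t + q := by omega
        rw [this] at h2
        rw [h1, h2]
      have hpp : hasPeriod w (m - p) p := fun t ht => hp t (by omega)
      have hrec := ih p (q - p) (m - p) w (by omega) (by omega) hpp hqp
      have hg : Nat.gcd p (q - p) = Nat.gcd p q := by
        conv_rhs => rw [show q = (q - p) + p by omega]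
        rw [Nat.gcd_add_self_right]
      rw [hg] at hrec
      set g := Nat.gcd p q with hgdef
      have hgp : g ∣ p := Nat.gcd_dvd_left p q
      have hgq : g ∣ q := Nat.gcd_dvd_right p q
      have hgle : g ≤ p := Nat.le_of_dvd hp0 hgp
      have hqpg : p + g ≤ q := by
        have hdvd : g ∣ q - p := Nat.dvd_sub hgq hgp
        have := Nat.le_of_dvd (by omega) hdvd
        omega
      intro t ht
      by_cases hcase : t + g < m - p
      · exact hrec t hcase
      · have htp : p ≤ t := by omega
        have e1 : w (t - p) = w (t - p + p) := hp _ (by omega)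
        have e2 : w (t - p) = w (t - p + g) := hrec _ (by omega)
        have e3 : w (t - p + g) = w (t - p + g + p) := hp _ (by omega)
        have r1 : t - p + p = t := by omega
        have r2 : t - p + g + p = t + g := by omega
        rw [r1] at e1; rw [r2] at e3
        rw [← e1, e2, e3]
    · subst heq; simpa using hp
    · -- symmetric
      have hqp : hasPeriod w (m - q) (p - q) := by
        intro t ht
        have htq : t + p < m := by omega
        have h1 : w t = w (t + p) := hp t htq
        have h2 : w (t + (p - q)) = w (t + (p - q) + q) := hq _ (by omega)
        have : t + (p - q) + q = t + p := by omega
        rw [this] at h2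
        rw [h1, h2]
      have hpp : hasPeriod w (m - q) q := fun t ht => hq t (by omega)
      have hrec := ih q (p - q) (m - q) w (by omega) (by omega) hpp hqp
      have hg : Nat.gcd q (p - q) = Nat.gcd p q := by
        rw [Nat.gcd_comm p q]
        conv_rhs => rw [show p = (p - q) + q by omega]
        rw [Nat.gcd_add_self_right]
      rw [hg] at hrec
      set g := Nat.gcd p q with hgdef
      have hgp : g ∣ p := Nat.gcd_dvd_left p q
      have hgq : g ∣ q := Nat.gcd_dvd_right p q
      have hqpg : q + g ≤ p := by
        have hdvd : g ∣ p - q := Nat.dvd_sub hgp hgq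
        have := Nat.le_of_dvd (by omega) hdvd
        omega
      intro t ht
      by_cases hcase : t + g < m - q
      · exact hrec t hcase
      · have htp : q ≤ t := by omega
        have e1 : w (t - q) = w (t - q + q) := hq _ (by omega)
        have e2 : w (t - q) = w (t - q + g) := hrec _ (by omega)
        have e3 : w (t - q + g) = w (t - q + g + q) := hq _ (by omega)
        have r1 : t - q + q = t := by omega
        have r2 : t - q + g + q = t + g := by omega
        rw [r1] at e1; rw [r2] at e3
        rw [← e1, e2, e3]

/-- If `w` has smallest period `p ≤ m/2`, then any two occurrences at `i < j`
satisfy: either `j - i` is a multiple of `p` with `j - i ≤ m - p`, or `j - i > m/2`. -/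
theorem periodic_occurrence_distances {α : Type*} (S w : ℕ → α) (m p i j : ℕ)
    (hp1 : 1 ≤ p) (hp2 : 2 * p ≤ m)
    (hper : hasPeriod w m p)
    (hmin : ∀ q, 1 ≤ q → q < p → ¬ hasPeriod w m q)
    (hi : occursAt S w m i) (hj : occursAt S w m j) (hij : i < j) :
    (p ∣ (j - i) ∧ j - i ≤ m - p) ∨ 2 * (j - i) > m := by
  set d := j - i with hd
  by_cases hbig : 2 * d > m
  · exact Or.inr hbig
  left
  push_neg at hbig
  have hd1 : 1 ≤ d := by omega
  have hdper : hasPeriod w m d := by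
    intro t ht
    have h1 : S (i + (t + d)) = w (t + d) := hi _ ht
    have h2 : S (j + t) = w t := hj _ (by omega)
    have : i + (t + d) = j + t := by omega
    rw [this, h2] at h1
    exact h1
  have hfw := fineWilf (p + d) p d m w le_rfl (by omega) hper hdper
  set g := Nat.gcd p d with hgdef
  have hgp : g ∣ p := Nat.gcd_dvd_left p d
  have hg1 : 1 ≤ g := Nat.pos_of_dvd_of_pos hgp (by omega)
  have hgle : g ≤ p := Nat.le_of_dvd (by omega) hgp
  have hgeq : g = p := by
    by_contra h
    exact hmin g hg1 (by omega) hfw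
  constructor
  · rw [← hgeq]; exact Nat.gcd_dvd_right p d
  · omega
end

section
/- Let w be a string of length m with period p = per(w) ≤ m/2, and suppose w occurs in S at positions i and i + p. Then S[i .. i + m + p - 1] has period p. -/
/-- If `w` of length `m` has smallest period `p ≤ m/2` and occurs at `i` and `i + p`,
then the substring `S[i .. i + m + p - 1]` has period `p`. -/
theorem occurrences_merge_into_run {α : Type*} (S w : ℕ → α) (m p i : ℕ)
    (hp1 : 1 ≤ p) (hp2 : 2 * p ≤ m)
    (hper : hasPeriod w m p)
    (hmin : ∀ q, 1 ≤ q → q < p → ¬ hasPeriod w m q)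
    (hi : occursAt S w m i) (hip : occursAt S w m (i + p)) :
    ∀ t, t + p < m + p → S (i + t) = S (i + t + p) := by
  intro t ht
  have htm : t < m := by omega
  have h1 := hi t htm
  have h2 := hip t htm
  rw [h1, show i + t + p = i + p + t by ring, h2]
end

section
/- Let S be a string of length n, let A = {s_j = s + j·d : 0 ≤ j ≤ k-1} be an arithmetic progression of positions all contained in a run of S with period d (meaning S[s .. s_{k-1} + d - 1] has period d), and let i be any position. Let l_p = LCP(i, s), the length of the longest common prefix of the suffixes S[i..] and S[s..]. If l_p < d, then LCP(i, s_j) = l_p for every j with 0 ≤ j ≤ k-2. -/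
/-- `ℓ` is the length of the longest common prefix of the suffixes of `S`
starting at `x` and at `y`. -/
def isLCP {α : Type*} (S : ℕ → α) (x y ℓ : ℕ) : Prop :=
  (∀ t < ℓ, S (x + t) = S (y + t)) ∧ S (x + ℓ) ≠ S (y + ℓ)

/-- If the positions `s_j = s + j·d`, `0 ≤ j ≤ k-1`, lie in a run with period `d`
(i.e. `S[s .. s + (k-1)d + d - 1]` has period `d`) and `l_p = LCP(i,s) < d`, then
`LCP(i, s_j) = l_p` for every `j ≤ k - 2`. -/
theorem lcp_in_run_small {α : Type*} (S : ℕ → α) (s d k i lp : ℕ)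
    (hd : 1 ≤ d) (hk : 1 ≤ k)
    (hrun : ∀ t < (k - 1) * d, S (s + t) = S (s + t + d))
    (hlcp : isLCP S i s lp) (hsmall : lp < d) :
    ∀ j, j + 1 < k → isLCP S i (s + j * d) lp := by
  have key : ∀ j, j + 1 < k → ∀ t, t < d → S (s + j * d + t) = S (s + t) := by
    intro j
    induction j with
    | zero => intro _ t _; simp
    | succ j ih =>
      intro hj t ht
      have hj' : j + 1 < k := by omega
      have h1 : j * d + t < (k - 1) * d := by
        have : j * d + t < (j + 1) * d := by nlinarith
        have h2 : (j + 1) * d ≤ (k - 1) * d := Nat.mul_le_mul_right d (by omega)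
        omega
      have := hrun (j * d + t) h1
      have e : s + (j + 1) * d + t = s + (j * d + t) + d := by ring
      rw [e, ← this, show s + (j * d + t) = s + j * d + t by ring, ih hj' t ht]
  intro j hj
  obtain ⟨h1, h2⟩ := hlcp
  constructor
  · intro t ht
    rw [key j hj t (by omega)]; exact h1 t ht
  · rw [key j hj lp hsmall]; exact h2
end

section
/- Merging LCP-partitioned lists: let w_x be a string, and for strings v, w define them lexicographically ordered with lcp(v,w) denoting the longest common prefix length. Suppose strings u, v satisfy lcp(u, w_x) = a, lcp(v, w_x) = b with a < b, and u < w_x lexicographically. Then lcp(u, v) = a and u < v lexicographically. Symmetrically, if u > w_x and v's lcp with w_x is larger, then u > v. -/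
/-- The length of the longest common prefix of two lists. -/
def lcpLen {α : Type*} [DecidableEq α] : List α → List α → ℕ
  | a :: u, b :: v => if a = b then lcpLen u v + 1 else 0
  | _, _ => 0

/-- Merging LCP-partitioned lists: if `lcp(u,w) = a < b = lcp(v,w)`, then:
if `u < w` lexicographically then `lcp(u,v) = a` and `u < v`; symmetrically if
`u > w` then `lcp(u,v) = a` and `u > v`. -/
theorem lcp_partition_merge {α : Type*} [LinearOrder α]
    (u v w : List α) (a b : ℕ)
    (ha : lcpLen u w = a) (hb : lcpLen v w = b) (hab : a < b) :
    (List.Lex (· < ·) u w → lcpLen u v = a ∧ List.Lex (· < ·) u v) ∧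
    (List.Lex (· < ·) w u → lcpLen u v = a ∧ List.Lex (· < ·) v u) := by
  induction u generalizing v w a b with
  | nil =>
    have ha0 : a = 0 := by cases w <;> simpa [lcpLen] using ha.symm
    subst ha0
    cases v with
    | nil =>
      cases w <;> simp [lcpLen] at hb <;> omega
    | cons c v' =>
      refine ⟨fun _ => ⟨by simp [lcpLen], List.Lex.nil⟩, fun h => absurd h ?_⟩
      intro h; cases h
  | cons x u' ih =>
    cases v with
    | nil =>
      cases w <;> simp [lcpLen] at hb <;> omega
    | cons c v' =>
      cases w with
      | nil => simp [lcpLen] at hb; omega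
      | cons d w' =>
        by_cases hcd : c = d
        · subst hcd
          by_cases hx : x = c
          · subst hx
            simp [lcpLen] at ha hb
            obtain ⟨a', ha', rfl⟩ : ∃ a', lcpLen u' w' = a' ∧ a = a' + 1 := ⟨_, rfl, ha.symm⟩
            have hb' : lcpLen v' w' = b - 1 := by omega
            have := ih v' w' a' (b - 1) ha' hb' (by omega)
            constructor
            · intro h
              have h' : List.Lex (· < ·) u' w' := by
                cases h with
                | cons h => exact h
                | rel h => exact absurd h (lt_irrefl _)
              obtain ⟨h1, h2⟩ := this.1 h'
              exact ⟨by simp [lcpLen, h1], List.Lex.cons h2⟩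
            · intro h
              have h' : List.Lex (· < ·) w' u' := by
                cases h with
                | cons h => exact h
                | rel h => exact absurd h (lt_irrefl _)
              obtain ⟨h1, h2⟩ := this.2 h'
              exact ⟨by simp [lcpLen, h1], List.Lex.cons h2⟩
          · have ha0 : a = 0 := by simp [lcpLen, hx] at ha; omega
            subst ha0
            refine ⟨fun h => ⟨by simp [lcpLen, hx], ?_⟩, fun h => ⟨by simp [lcpLen, hx], ?_⟩⟩
            · cases h with
              | cons h => exact absurd rfl hx
              | rel h => exact List.Lex.rel h
            · cases h with
              | cons h => exact absurd rfl hx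
              | rel h => exact List.Lex.rel h
        · simp [lcpLen, hcd] at hb; omega
end

section
/- Correctness of the stairs-update data structure reporting: let t, p ≥ 1, and let U_1,...,U_u be increasing stairs updates, each given by a triple (a_r, b_r, p) with 1 ≤ a_r ≤ b_r ≤ t. Define the target counter values C_i = Σ_r f_r(i), where f_r(i) = ⌈(i - a_r + 1)/p⌉ if a_r ≤ i ≤ b_r and 0 otherwise. Then the sequential algorithm that maintains an array Remainders[0..p-1] and a running sum C — incrementing Remainders[i mod p] by the number of updates starting at i, adding Remainders[i mod p] to C at each step i, reporting C as C_i, and after reporting at i = b_r subtracting ⌈(b_r - a_r + 1)/p⌉ from C and 1 from Remainders[a_r mod p] — reports exactly the values C_i for i = 1,...,t. -/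
/-- Ceiling division `⌈q / p⌉` on naturals. -/
def ceilDiv (q p : ℕ) : ℕ := (q + p - 1) / p

/-- The state of the stairs-update data structure: the `Remainders` array
(indexed by residues mod `p`) and the running sum `C`. -/
structure StairsState where
  rem : ℕ → ℕ
  C : ℕ

/-- One step of the reporting algorithm at position `i`: add the number of
updates starting at `i` to `Remainders[i mod p]`, add `Remainders[i mod p]` to
`C` and report it, then for each update `(a,b)` ending at `i` subtract
`⌈(b-a+1)/p⌉` from `C` and `1` from `Remainders[a mod p]`. -/
def stairsStep (p : ℕ) (U : List (ℕ × ℕ)) (st : StairsState) (i : ℕ) :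
    StairsState × ℕ :=
  let starts := (U.filter (fun u => u.1 = i)).length
  let rem1 : ℕ → ℕ := fun r => if r = i % p then st.rem r + starts else st.rem r
  let C1 := st.C + rem1 (i % p)
  let ends := U.filter (fun u => u.2 = i)
  let rem2 : ℕ → ℕ := fun r => rem1 r - (ends.filter (fun u => u.1 % p = r)).length
  let C2 := C1 - (ends.map (fun u => ceilDiv (u.2 - u.1 + 1) p)).sum
  (⟨rem2, C2⟩, C1)

/-- The state after sequentially processing positions `1, …, i`. -/
def stairsRun (p : ℕ) (U : List (ℕ × ℕ)) : ℕ → StairsState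
  | 0 => ⟨fun _ => 0, 0⟩
  | i + 1 => (stairsStep p U (stairsRun p U i) (i + 1)).1

/-- The value reported at position `i ≥ 1`. -/
def stairsReport (p : ℕ) (U : List (ℕ × ℕ)) (i : ℕ) : ℕ :=
  (stairsStep p U (stairsRun p U (i - 1)) i).2

lemma ceilDiv_succ (q p : ℕ) (hp : 1 ≤ p) :
    ceilDiv (q + 1) p = ceilDiv q p + (if p ∣ q then 1 else 0) := by
  unfold ceilDiv
  obtain ⟨k, s, hs, rfl⟩ : ∃ k s, s < p ∧ q = p * k + s :=
    ⟨q / p, q % p, Nat.mod_lt _ hp, (Nat.div_add_mod q p).symm⟩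
  have hpk : p * (k + 1) = p * k + p := by ring
  by_cases h0 : s = 0
  · subst h0
    rw [if_pos ⟨k, by omega⟩]
    have e1 : p * k + 0 + 1 + p - 1 = p * (k + 1) := by omega
    have e2 : p * k + 0 + p - 1 = p * k + (p - 1) := by omega
    rw [e1, e2, Nat.mul_div_cancel_left _ (by omega : 0 < p),
      Nat.mul_add_div (by omega), Nat.div_eq_of_lt (by omega)]
  · rw [if_neg (fun h => by
      have h2 : p ∣ s := (Nat.dvd_add_right (Dvd.intro k rfl)).mp h
      have := Nat.le_of_dvd (by omega) h2
      omega)]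
    have e1 : p * k + s + 1 + p - 1 = p * (k + 1) + s := by omega
    have e2 : p * k + s + p - 1 = p * (k + 1) + (s - 1) := by omega
    rw [e1, e2, Nat.mul_add_div (by omega), Nat.mul_add_div (by omega),
      Nat.div_eq_of_lt (by omega), Nat.div_eq_of_lt (by omega)]

lemma ceilDiv_one' (p : ℕ) (hp : 1 ≤ p) : ceilDiv 1 p = 1 := by
  have h := ceilDiv_succ 0 p hp
  have : ceilDiv 0 p = 0 := by unfold ceilDiv; exact Nat.div_eq_of_lt (by omega)
  rw [if_pos (dvd_zero p), this] at h
  simpa using h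

section helpers
variable {α : Type*}

lemma sum_map_add (l : List α) (f g : α → ℕ) :
    (l.map fun u => f u + g u).sum = (l.map f).sum + (l.map g).sum := by
  induction l with
  | nil => simp
  | cons a l ih => simp [ih]; omega

lemma sum_map_le (l : List α) (f g : α → ℕ) (h : ∀ u ∈ l, g u ≤ f u) :
    (l.map g).sum ≤ (l.map f).sum := by
  induction l with
  | nil => simp
  | cons a l ih =>
    simp only [List.map_cons, List.sum_cons]
    have h1 := h a (by simp)
    have h2 := ih (fun u hu => h u (by simp [hu]))
    omega

lemma sum_map_sub (l : List α) (f g : α → ℕ) (h : ∀ u ∈ l, g u ≤ f u) :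
    (l.map f).sum - (l.map g).sum = (l.map fun u => f u - g u).sum := by
  induction l with
  | nil => simp
  | cons a l ih =>
    simp only [List.map_cons, List.sum_cons]
    have h1 := h a (by simp)
    have h2 := sum_map_le l f g (fun u hu => h u (by simp [hu]))
    have h3 := ih (fun u hu => h u (by simp [hu]))
    omega

lemma filter_length_eq (l : List α) (q : α → Bool) :
    (l.filter q).length = (l.map fun u => if q u then 1 else 0).sum := by
  induction l with
  | nil => simp
  | cons a l ih =>
    by_cases hq : q a <;> simp [List.filter_cons, hq, ih] <;> omega

lemma sum_map_filter (l : List α) (q : α → Bool) (h : α → ℕ) :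
    ((l.filter q).map h).sum = (l.map fun u => if q u then h u else 0).sum := by
  induction l with
  | nil => simp
  | cons a l ih =>
    by_cases hq : q a <;> simp [List.filter_cons, hq, ih] <;> omega

end helpers

lemma stairsStep_rem (p : ℕ) (U : List (ℕ × ℕ)) (st : StairsState) (i r : ℕ) :
    ((stairsStep p U st i).1).rem r =
      (if r = i % p then st.rem r + (U.filter (fun u => u.1 = i)).length else st.rem r)
        - ((U.filter (fun u => u.2 = i)).filter (fun u => u.1 % p = r)).length := rfl

lemma stairsStep_C (p : ℕ) (U : List (ℕ × ℕ)) (st : StairsState) (i : ℕ) :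
    ((stairsStep p U st i).1).C =
      (st.C + (st.rem (i % p) + (U.filter (fun u => u.1 = i)).length))
        - ((U.filter (fun u => u.2 = i)).map (fun u => ceilDiv (u.2 - u.1 + 1) p)).sum := by
  simp [stairsStep]

lemma stairsStep_report (p : ℕ) (U : List (ℕ × ℕ)) (st : StairsState) (i : ℕ) :
    (stairsStep p U st i).2 =
      st.C + (st.rem (i % p) + (U.filter (fun u => u.1 = i)).length) := by
  simp [stairsStep]

lemma pointC (p i a b : ℕ) (hp : 1 ≤ p) (hab : a ≤ b) :
    (if a ≤ i ∧ i < b then ceilDiv (i - a + 1) p else 0)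
      + (if a ≤ i + 1 ∧ i < b ∧ a % p = (i + 1) % p then 1 else 0)
      = if a ≤ i + 1 ∧ i + 1 ≤ b then ceilDiv (i + 1 - a + 1) p else 0 := by
  by_cases h1 : a ≤ i ∧ i < b
  · have hd : (a % p = (i + 1) % p) ↔ p ∣ (i - a + 1) := by
      have e2 : i + 1 - a = i - a + 1 := by omega
      rw [← e2]
      exact Nat.modEq_iff_dvd' (by omega)
    have key : ceilDiv (i + 1 - a + 1) p
        = ceilDiv (i - a + 1) p + (if p ∣ (i - a + 1) then 1 else 0) := by
      have e : i + 1 - a + 1 = (i - a + 1) + 1 := by omega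
      rw [e]
      exact ceilDiv_succ (i - a + 1) p hp
    rw [if_pos h1, key]
    by_cases hmod : a % p = (i + 1) % p
    · rw [if_pos (show a ≤ i + 1 ∧ i < b ∧ a % p = (i + 1) % p from ⟨by omega, h1.2, hmod⟩),
        if_pos (show a ≤ i + 1 ∧ i + 1 ≤ b from ⟨by omega, by omega⟩), if_pos (hd.mp hmod)]
    · rw [if_neg (fun h => hmod h.2.2),
        if_pos (show a ≤ i + 1 ∧ i + 1 ≤ b from ⟨by omega, by omega⟩),
        if_neg (fun h => hmod (hd.mpr h))]
  · by_cases h3 : a = i + 1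
    · subst h3
      have e : i + 1 - (i + 1) + 1 = 1 := by omega
      rw [e, ceilDiv_one' p hp]
      have hmm : (i + 1) % p = (i + 1) % p := rfl
      split_ifs <;> omega
    · split_ifs <;> omega

-- combined invariant
lemma stairs_invariant (p : ℕ) (hp : 1 ≤ p) (U : List (ℕ × ℕ))
    (hU : ∀ u ∈ U, 1 ≤ u.1 ∧ u.1 ≤ u.2) : ∀ i,
    (stairsRun p U i).C
        = (U.map fun u => if u.1 ≤ i ∧ i < u.2 then ceilDiv (i - u.1 + 1) p else 0).sum
      ∧ ∀ r, (stairsRun p U i).rem r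
        = (U.map fun u => if u.1 ≤ i ∧ i < u.2 ∧ u.1 % p = r then 1 else 0).sum := by
  intro i
  induction i with
  | zero =>
    constructor
    · refine (List.sum_eq_zero ?_).symm
      intro x hx
      simp only [List.mem_map] at hx
      obtain ⟨u, hu, rfl⟩ := hx
      have := hU u hu
      rw [if_neg (by omega)]
    · intro r
      refine (List.sum_eq_zero ?_).symm
      intro x hx
      simp only [List.mem_map] at hx
      obtain ⟨u, hu, rfl⟩ := hx
      have := hU u hu
      rw [if_neg (by omega)]
  | succ i ih =>
    obtain ⟨hC, hR⟩ := ih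
    set n := i + 1 with hn
    -- rem1 at residue r
    have starts_eq : (U.filter (fun u => u.1 = n)).length
        = (U.map fun u => if u.1 = n then 1 else 0).sum := by
      rw [filter_length_eq]; simp
    have rem1_eq : ∀ r, (stairsRun p U i).rem r
          + (if r = n % p then (U.filter (fun u => u.1 = n)).length else 0)
        = (U.map fun u => if u.1 ≤ n ∧ i < u.2 ∧ u.1 % p = r then 1 else 0).sum := by
      intro r
      by_cases hr : r = n % p
      · rw [if_pos hr, hR r, starts_eq, ← sum_map_add]
        refine congrArg _ (List.map_congr_left ?_)
        intro u hu
        have h := hU u hu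
        by_cases ha : u.1 = n
        · have hmm : u.1 % p = n % p := by rw [ha]
          split_ifs <;> omega
        · split_ifs <;> omega
      · rw [if_neg hr, Nat.add_zero, hR r]
        refine congrArg _ (List.map_congr_left ?_)
        intro u hu
        have h := hU u hu
        by_cases ha : u.1 = n
        · have hmm : u.1 % p = n % p := by rw [ha]
          split_ifs <;> omega
        · split_ifs <;> omega
    -- ends count at residue r
    have ends_eq : ∀ r, ((U.filter (fun u => u.2 = n)).filter (fun u => u.1 % p = r)).length
        = (U.map fun u => if u.2 = n ∧ u.1 % p = r then 1 else 0).sum := by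
      intro r
      rw [filter_length_eq, sum_map_filter]
      refine congrArg _ (List.map_congr_left ?_)
      intro u hu
      split_ifs <;> simp_all
    -- ends sum for C
    have endsC_eq : ((U.filter (fun u => u.2 = n)).map
          (fun u => ceilDiv (u.2 - u.1 + 1) p)).sum
        = (U.map fun u => if u.2 = n then ceilDiv (u.2 - u.1 + 1) p else 0).sum := by
      rw [sum_map_filter]
      refine congrArg _ (List.map_congr_left ?_)
      intro u hu
      split_ifs <;> simp_all
    constructor
    · -- C invariant
      show ((stairsStep p U (stairsRun p U i) n).1).C = _
      rw [stairsStep_C]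
      have hC1 : (stairsRun p U i).C
            + ((stairsRun p U i).rem (n % p) + (U.filter (fun u => u.1 = n)).length)
          = (U.map fun u => if u.1 ≤ n ∧ n ≤ u.2 then ceilDiv (n - u.1 + 1) p else 0).sum := by
        have := rem1_eq (n % p)
        rw [if_pos rfl] at this
        rw [← Nat.add_assoc, Nat.add_assoc, this, hC, ← sum_map_add]
        refine congrArg _ (List.map_congr_left ?_)
        intro u hu
        exact pointC p i u.1 u.2 hp (hU u hu).2
      rw [hC1, endsC_eq, sum_map_sub]
      · refine congrArg _ (List.map_congr_left ?_)
        intro u hu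
        have h := hU u hu
        by_cases hb : u.2 = n
        · have hc : ceilDiv (u.2 - u.1 + 1) p = ceilDiv (n - u.1 + 1) p := by rw [hb]
          split_ifs <;> omega
        · split_ifs <;> omega
      · intro u hu
        have h := hU u hu
        by_cases hb : u.2 = n
        · have hc : ceilDiv (u.2 - u.1 + 1) p = ceilDiv (n - u.1 + 1) p := by rw [hb]
          split_ifs <;> omega
        · split_ifs <;> omega
    · -- rem invariant
      intro r
      show ((stairsStep p U (stairsRun p U i) n).1).rem r = _
      rw [stairsStep_rem]
      have h1 : (if r = n % p then (stairsRun p U i).rem r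
              + (U.filter (fun u => u.1 = n)).length else (stairsRun p U i).rem r)
          = (U.map fun u => if u.1 ≤ n ∧ i < u.2 ∧ u.1 % p = r then 1 else 0).sum := by
        rw [← rem1_eq r]
        split_ifs <;> omega
      rw [h1, ends_eq, sum_map_sub]
      · refine congrArg _ (List.map_congr_left ?_)
        intro u hu
        have h := hU u hu
        split_ifs <;> omega
      · intro u hu
        have h := hU u hu
        split_ifs <;> omega


/-- Correctness of the stairs-update data structure: for increasing stairs
updates `(a_r, b_r, p)` with `1 ≤ a_r ≤ b_r ≤ t` and common step width `p`,
the sequential algorithm reports at each `1 ≤ i ≤ t` exactly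
`C_i = Σ_r ⌈(i - a_r + 1)/p⌉` over updates with `a_r ≤ i ≤ b_r`. -/
theorem stairs_reporting_correct (t p : ℕ) (hp : 1 ≤ p)
    (U : List (ℕ × ℕ)) (hU : ∀ u ∈ U, 1 ≤ u.1 ∧ u.1 ≤ u.2 ∧ u.2 ≤ t) :
    ∀ i, 1 ≤ i → i ≤ t →
      stairsReport p U i
        = (U.map (fun u =>
            if u.1 ≤ i ∧ i ≤ u.2 then ceilDiv (i - u.1 + 1) p else 0)).sum := by
  intro i hi _
  obtain ⟨j, rfl⟩ : ∃ j, i = j + 1 := ⟨i - 1, by omega⟩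
  have hU' : ∀ u ∈ U, 1 ≤ u.1 ∧ u.1 ≤ u.2 := fun u hu => ⟨(hU u hu).1, (hU u hu).2.1⟩
  obtain ⟨hC, hR⟩ := stairs_invariant p hp U hU' j
  unfold stairsReport
  have hj : j + 1 - 1 = j := by omega
  rw [hj, stairsStep_report]
  have h := stairs_invariant p hp U hU' j
  have rem1 : (stairsRun p U j).rem ((j + 1) % p)
        + (U.filter (fun u => u.1 = j + 1)).length
      = (U.map fun u => if u.1 ≤ j + 1 ∧ j < u.2 ∧ u.1 % p = (j + 1) % p then 1 else 0).sum := by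
    rw [hR, filter_length_eq, ← sum_map_add]
    refine congrArg _ (List.map_congr_left ?_)
    intro u hu
    have h := hU' u hu
    simp only [decide_eq_true_eq]
    by_cases ha : u.1 = j + 1
    · have hmm : u.1 % p = (j + 1) % p := by rw [ha]
      split_ifs <;> omega
    · split_ifs <;> omega
  rw [← Nat.add_assoc, Nat.add_assoc, rem1, hC, ← sum_map_add]
  refine congrArg _ (List.map_congr_left ?_)
  intro u hu
  exact pointC p j u.1 u.2 hp (hU' u hu).2
end

section
/- Sliding-window update decomposition: fix a step width p and a window [x, y] slid k times, i.e., counter C_t is to be increased by the number of indices j ∈ {0,...,k-1} with x + j·p ≤ t ≤ y + j·p. This total effect equals the sum of: (1) an increasing stairs update (x, x + (k-1)p - 1, p) adding ⌈(t - x + 1)/p⌉ on its span; (2) a negative increasing stairs update (y+1, y + (k-1)p, p) subtracting ⌈(t - y)/p⌉ on its span; and (3) an interval increment adding k on [x + (k-1)p, y + (k-1)p]. That is, for every t, #{j ∈ [0,k-1] : x + jp ≤ t ≤ y + jp} equals the sum of the contributions of these three updates at t. -/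
/-- Sliding-window update decomposition: sliding the window `[x,y]` `k` times
with step `p` (the `j`-th copy covering `[x + jp, y + jp]`) has, at every
counter index `t`, the same total effect as the sum of an increasing stairs
update `(x, x+(k-1)p-1, p)`, a negative increasing stairs update
`(y+1, y+(k-1)p, p)`, and an interval increment of `k` on
`[x+(k-1)p, y+(k-1)p]`. -/
theorem sliding_window_decomposition (x y p k : ℤ)
    (hp : 1 ≤ p) (hxy : x ≤ y) (hk : 1 ≤ k) (t : ℤ) :
    (((Finset.Icc (0 : ℤ) (k - 1)).filter
        (fun j => x + j * p ≤ t ∧ t ≤ y + j * p)).card : ℤ)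
      = (if x ≤ t ∧ t ≤ x + (k - 1) * p - 1 then (t - x + p) / p else 0)
        - (if y + 1 ≤ t ∧ t ≤ y + (k - 1) * p then (t - y - 1 + p) / p else 0)
        + (if x + (k - 1) * p ≤ t ∧ t ≤ y + (k - 1) * p then k else 0) := by
  have hp0 : (0:ℤ) < p := hp
  set A := (t - x) / p with hA
  set B := (t - y - 1 + p) / p with hB
  have h1 : ∀ j : ℤ, x + j * p ≤ t ↔ j ≤ A := by
    intro j
    rw [hA, Int.le_ediv_iff_mul_le hp0]
    constructor <;> intro h <;> linarith
  have h2 : ∀ j : ℤ, t ≤ y + j * p ↔ B ≤ j := by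
    intro j
    have hiff : B ≤ j ↔ ¬ (j + 1 ≤ B) := by omega
    rw [hiff, hB, Int.le_ediv_iff_mul_le hp0]
    have hexp : (j + 1) * p = j * p + p := by ring
    constructor
    · intro h h'
      rw [hexp] at h'
      linarith
    · intro h
      by_contra h'
      push_neg at h'
      rw [hexp] at h
      linarith
  have hAB : B - 1 ≤ A := by
    have h := (h2 (B - 1)).not.mpr (by omega)
    have hx : x + (B - 1) * p ≤ t := by push_neg at h; linarith
    exact (h1 (B - 1)).mp hx
  have c1 : x ≤ t ↔ 0 ≤ A := by
    have := h1 0; simpa using this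
  have c2 : x + (k - 1) * p ≤ t ↔ k - 1 ≤ A := h1 (k - 1)
  have c3 : t ≤ y + (k - 1) * p ↔ B ≤ k - 1 := h2 (k - 1)
  have c4 : y + 1 ≤ t ↔ 1 ≤ B := by
    have := h2 0; simp only [zero_mul, add_zero] at this; omega
  have c5 : t ≤ x + (k - 1) * p - 1 ↔ A ≤ k - 2 := by
    have := h1 (k - 1); omega
  have hval : (t - x + p) / p = A + 1 := by
    rw [show t - x + p = (t - x) + 1 * p by ring,
      Int.add_mul_ediv_right _ _ (by omega : p ≠ 0)]
  have hfilt : (Finset.Icc (0:ℤ) (k-1)).filter (fun j => x + j * p ≤ t ∧ t ≤ y + j * p)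
      = Finset.Icc (max 0 B) (min (k-1) A) := by
    ext j
    simp only [Finset.mem_filter, Finset.mem_Icc, h1 j, h2 j]
    omega
  rw [hfilt, Int.card_Icc, hval]
  simp only [c1, c2, c3, c4, c5]
  split_ifs <;> omega
end
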